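/- Let λ, μ : ℕ → ℝ be summable sequences of nonnegative real numbers and define F : [0,1] → ℝ by F(t) = ∑_{n=1}^∞ (1 + t·λ_n + (1−t)·μ_n)·log(1 + t·λ_n + (1−t)·μ_n). Then F is twice differentiable on (0,1) and for every t ∈ (0,1), F''(t) = ∑_{n=1}^∞ (λ_n − μ_n)² / (1 + t·λ_n + (1−t)·μ_n). -/

import Mathlib

/-- For summable nonnegative sequences λ, μ, the function
F(t) = ∑ (1 + t·λ_n + (1−t)·μ_n)·log(1 + t·λ_n + (1−t)·μ_n) is twice differentiable
on (0,1) with F''(t) = ∑ (λ_n − μ_n)² / (1 + t·λ_n + (1−t)·μ_n). -/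
theorem stmt_15 (l m : ℕ → ℝ) (hl : ∀ n, 0 ≤ l n) (hm : ∀ n, 0 ≤ m n)
    (hl_sum : Summable l) (hm_sum : Summable m) :
    let F : ℝ → ℝ := fun t =>
      ∑' n, (1 + t * l n + (1 - t) * m n) * Real.log (1 + t * l n + (1 - t) * m n)
    ∃ F' : ℝ → ℝ,
      (∀ t ∈ Set.Ioo (0:ℝ) 1, HasDerivAt F (F' t) t) ∧
      (∀ t ∈ Set.Ioo (0:ℝ) 1,
        HasDerivAt F' (∑' n, (l n - m n) ^ 2 / (1 + t * l n + (1 - t) * m n)) t) := by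
  intro F
  -- notation
  set x : ℕ → ℝ → ℝ := fun n t => 1 + t * l n + (1 - t) * m n with hxdef
  set C : ℝ := ∑' n, (l n + m n) with hC
  have hlm_sum : Summable (fun n => l n + m n) := hl_sum.add hm_sum
  have hnn : ∀ n, 0 ≤ l n + m n := fun n => add_nonneg (hl n) (hm n)
  have hC0 : 0 ≤ C := tsum_nonneg hnn
  have hleC : ∀ n, l n + m n ≤ C := fun n =>
    Summable.le_tsum hlm_sum n (fun j _ => hnn j)
  -- basic bounds on x, for t ∈ Ioo 0 1
  have hx1 : ∀ n, ∀ t ∈ Set.Ioo (0:ℝ) 1, 1 ≤ x n t := by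
    intro n t ht
    have h1 : 0 ≤ t * l n := mul_nonneg ht.1.le (hl n)
    have h2 : 0 ≤ (1 - t) * m n := mul_nonneg (by linarith [ht.2]) (hm n)
    simp only [hxdef]; linarith
  have hxle : ∀ n, ∀ t ∈ Set.Ioo (0:ℝ) 1, x n t ≤ 1 + (l n + m n) := by
    intro n t ht
    have h1 : t * l n ≤ l n := by
      nlinarith [ht.1, ht.2, hl n]
    have h2 : (1 - t) * m n ≤ m n := by
      nlinarith [ht.1, ht.2, hm n]
    simp only [hxdef]; linarith
  have hxpos : ∀ n, ∀ t ∈ Set.Ioo (0:ℝ) 1, 0 < x n t := fun n t ht =>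
    lt_of_lt_of_le one_pos (hx1 n t ht)
  have hlog : ∀ n, ∀ t ∈ Set.Ioo (0:ℝ) 1,
      0 ≤ Real.log (x n t) ∧ Real.log (x n t) ≤ l n + m n := by
    intro n t ht
    constructor
    · exact Real.log_nonneg (hx1 n t ht)
    · calc Real.log (x n t) ≤ x n t - 1 :=
            by linarith [Real.log_le_sub_one_of_pos (hxpos n t ht)]
        _ ≤ l n + m n := by linarith [hxle n t ht]
  -- derivative of x n
  have hxderiv : ∀ n t, HasDerivAt (fun s => x n s) (l n - m n) t := by
    intro n t
    have h1 : HasDerivAt (fun s : ℝ => s * l n) (l n) t := hasDerivAt_mul_const (l n)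
    have h2 : HasDerivAt (fun s : ℝ => (1 - s) * m n) (-m n) t := by
      have := ((hasDerivAt_const t (1:ℝ)).sub (hasDerivAt_id t)).mul_const (m n)
      simpa using this
    have := ((hasDerivAt_const t (1:ℝ)).add h1).add h2
    exact this.congr_deriv (by ring)
  -- first-derivative terms
  set g' : ℕ → ℝ → ℝ := fun n t => (l n - m n) * (Real.log (x n t) + 1) with hg'def
  have hgderiv : ∀ n, ∀ t ∈ Set.Ioo (0:ℝ) 1,
      HasDerivAt (fun s => x n s * Real.log (x n s)) (g' n t) t := by
    intro n t ht
    have hne : x n t ≠ 0 := (hxpos n t ht).ne'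
    have hd := (hxderiv n t).mul ((hxderiv n t).log hne)
    refine hd.congr_deriv ?_
    simp only [hg'def]
    field_simp
  -- second-derivative terms
  have hg'deriv : ∀ n, ∀ t ∈ Set.Ioo (0:ℝ) 1,
      HasDerivAt (fun s => g' n s) ((l n - m n) ^ 2 / x n t) t := by
    intro n t ht
    have hne : x n t ≠ 0 := (hxpos n t ht).ne'
    have hd := (((hxderiv n t).log hne).add_const 1).const_mul (l n - m n)
    refine (hd.congr_deriv ?_)
    field_simp
  -- summable bound
  set u : ℕ → ℝ := fun n => (l n + m n) * (C + 1) with hu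
  have hu_sum : Summable u := hlm_sum.mul_right _
  have hbound1 : ∀ n, ∀ t ∈ Set.Ioo (0:ℝ) 1, ‖g' n t‖ ≤ u n := by
    intro n t ht
    have h1 := hlog n t ht
    have h2 := hleC n
    have : ‖g' n t‖ = |l n - m n| * |Real.log (x n t) + 1| := by
      simp [hg'def, abs_mul]
    rw [this]
    have ha : |l n - m n| ≤ l n + m n := by
      rw [abs_sub_le_iff]; constructor <;> nlinarith [hl n, hm n]
    have hb : |Real.log (x n t) + 1| ≤ C + 1 := by
      rw [abs_le]; constructor <;> nlinarith
    calc |l n - m n| * |Real.log (x n t) + 1| ≤ (l n + m n) * (C + 1) :=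
          mul_le_mul ha hb (abs_nonneg _) (hnn n)
      _ = u n := rfl
  have hbound2 : ∀ n, ∀ t ∈ Set.Ioo (0:ℝ) 1, ‖(l n - m n) ^ 2 / x n t‖ ≤ u n := by
    intro n t ht
    have h1 : (l n - m n) ^ 2 / x n t ≤ (l n - m n) ^ 2 := by
      apply div_le_self (sq_nonneg _) (hx1 n t ht)
    have h2 : (0:ℝ) ≤ (l n - m n) ^ 2 / x n t :=
      div_nonneg (sq_nonneg _) (hxpos n t ht).le
    have h3 : (l n - m n) ^ 2 ≤ (l n + m n) * (C + 1) := by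
      nlinarith [hl n, hm n, hleC n, hnn n, hC0]
    rw [Real.norm_eq_abs, abs_of_nonneg h2]
    exact h1.trans h3
  have hmem : (1/2 : ℝ) ∈ Set.Ioo (0:ℝ) 1 := by norm_num
  -- summability of the series at t = 1/2
  have hsum0 : Summable (fun n => x n (1/2) * Real.log (x n (1/2))) := by
    apply Summable.of_norm_bounded (g := fun n => (1 + C) * (l n + m n))
      (hlm_sum.mul_left _)
    intro n
    have h1 := hx1 n (1/2) hmem
    have h2 := hxle n (1/2) hmem
    have h3 := hlog n (1/2) hmem
    have h4 := hleC n
    have hnn' : 0 ≤ x n (1/2) * Real.log (x n (1/2)) :=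
      mul_nonneg (by linarith) h3.1
    rw [Real.norm_eq_abs, abs_of_nonneg hnn']
    nlinarith
  have hsum1 : Summable (fun n => g' n (1/2)) :=
    Summable.of_norm_bounded (g := u) hu_sum (fun n => hbound1 n (1/2) hmem)
  have hopen : IsOpen (Set.Ioo (0:ℝ) 1) := isOpen_Ioo
  have hconn : IsPreconnected (Set.Ioo (0:ℝ) 1) := (convex_Ioo (0:ℝ) 1).isPreconnected
  refine ⟨fun t => ∑' n, g' n t, ?_, ?_⟩
  · intro t ht
    exact hasDerivAt_tsum_of_isPreconnected hu_sum hopen hconn hgderiv hbound1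
      hmem hsum0 ht
  · intro t ht
    exact hasDerivAt_tsum_of_isPreconnected hu_sum hopen hconn hg'deriv hbound2
      hmem hsum1 ht
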